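/- (Convergence of the embedded approximate tree state in the infinite-degree limit.) Fix p ≥ 1, angles γ, β ∈ ℝ^p, and sequences of complex p×p matrices G_D (Hermitian-symmetric data G_D = (G_{D;j,k})) and L_D converging entrywise as D → ∞ to matrices G and L respectively. For each D, define the coefficient family c_D : {±1} × ℕ^p → ℂ by c_D(a_{p+1}, (n_1,…,n_p)) := Σ_{(a_1,…,a_p) ∈ {±1}^p} f_{1:p+1}(a_1,…,a_{p+1}) · exp(−(1/2) Σ_{l,m=1}^{p} G_{D;l,m} γ_l γ_m a_l a_m) · D^{−(Σ_l n_l)/2} · √( D! / ((D − Σ_l n_l)! ∏_l n_l!) ) · ∏_{l=1}^{p} ( −i Σ_{t=1}^{p} L_{D;l,t} γ_t a_t )^{n_l} whenever Σ_l n_l ≤ D, and c_D(a_{p+1}, n) := 0 otherwise; define the limiting family c : {±1} × ℕ^p → ℂ by c(a_{p+1}, (n_1,…,n_p)) := Σ_{(a_1,…,a_p) ∈ {±1}^p} f_{1:p+1}(a_1,…,a_{p+1}) · exp(−(1/2) Σ_{l,m=1}^{p} G_{l,m} γ_l γ_m a_l a_m) · ∏_{l=1}^{p} (1/√(n_l!))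 · ( −i Σ_{t=1}^{p} L_{l,t} γ_t a_t )^{n_l}. Then: (i) for every fixed (a_{p+1}, n) ∈ {±1} × ℕ^p, c_D(a_{p+1}, n) → c(a_{p+1}, n) as D → ∞; and (ii) if moreover Σ_{(a,n)} |c(a,n)|² = 1 and Σ_{(a,n)} |c_D(a,n)|² → 1 as D → ∞, then c_D → c in ℓ²({±1} × ℕ^p), i.e. Σ_{(a,n)} |c_D(a,n) − c(a,n)|² → 0. -/

import Mathlib

open scoped BigOperators ENNReal

noncomputable section

/-- The single-qubit `X`-rotation matrix element
`⟨a|e^{iθX}|b⟩ = cos θ` if `a = b` and `i sin θ` otherwise, for `a, b ∈ {±1}`. -/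
def braXket (θ : ℝ) (a b : ℤ) : ℂ :=
  if a = b then (Real.cos θ : ℂ) else Complex.I * (Real.sin θ : ℂ)

/-- The value (in `{±1} ⊆ ℤ`) of the `1`-indexed bit `a_t` of a bitstring `a`. -/
def bitVal {n : ℕ} (a : Fin n → ℤˣ) (t : ℕ) : ℤ :=
  if h : t - 1 < n then (a ⟨t - 1, h⟩ : ℤ) else 1

/-- The one-sided `f` tensor
`f_{1:p+1}(a_1,…,a_{p+1}) = (1/√2) ∏_{t=1}^p ⟨a_{t+1}|e^{−iβ_t X}|a_t⟩`. -/
def fOne (p : ℕ) (β : ℕ → ℝ) (a : Fin (p + 1) → ℤˣ) : ℂ :=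
  ((Real.sqrt 2 : ℂ))⁻¹ *
    ∏ t ∈ Finset.Icc 1 p, braXket (-β t) (bitVal a (t + 1)) (bitVal a t)

/-- The degree-`D` coefficient family
`c_D(a_{p+1}, n) = Σ_{a_{1:p}} f_{1:p+1}(a) exp(−(1/2) Σ G_{D;l,m} γ_l γ_m a_l a_m) ·
D^{−(Σn)/2} √(D!/((D−Σn)! ∏ n_l!)) ∏_l (−i Σ_t L_{D;l,t} γ_t a_t)^{n_l}` for `Σ n ≤ D`
and `0` otherwise. -/
def cD (p : ℕ) (γ β : ℕ → ℝ) (GD LD : Matrix (Fin p) (Fin p) ℂ) (D : ℕ)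
    (s : ℤˣ) (n : Fin p → ℕ) : ℂ :=
  if (∑ l, n l) ≤ D then
    ∑ b : Fin p → ℤˣ,
      fOne p β (Fin.snoc b s) *
        Complex.exp (-(1 / 2 : ℂ) *
          ∑ l : Fin p, ∑ m : Fin p,
            GD l m * (γ ((l : ℕ) + 1) : ℂ) * (γ ((m : ℕ) + 1) : ℂ) * ((b l : ℤ) : ℂ) *
              ((b m : ℤ) : ℂ)) *
        (((D : ℝ) ^ (-((∑ l, n l : ℕ) : ℝ) / 2) : ℝ) : ℂ) *
        ((Real.sqrt ((D.factorial : ℝ) /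
            (((D - ∑ l, n l).factorial : ℝ) * ∏ l, ((n l).factorial : ℝ))) : ℝ) : ℂ) *
        ∏ l : Fin p,
          (-Complex.I *
              ∑ t : Fin p, LD l t * (γ ((t : ℕ) + 1) : ℂ) * ((b t : ℤ) : ℂ)) ^ n l
  else 0

/-- The limiting (spin-boson Fock state) coefficient family
`c(a_{p+1}, n) = Σ_{a_{1:p}} f_{1:p+1}(a) exp(−(1/2) Σ G_{l,m} γ_l γ_m a_l a_m) ·
∏_l (1/√(n_l!)) (−i Σ_t L_{l,t} γ_t a_t)^{n_l}`. -/
def cLim (p : ℕ) (γ β : ℕ → ℝ) (G L : Matrix (Fin p) (Fin p) ℂ)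
    (s : ℤˣ) (n : Fin p → ℕ) : ℂ :=
  ∑ b : Fin p → ℤˣ,
    fOne p β (Fin.snoc b s) *
      Complex.exp (-(1 / 2 : ℂ) *
        ∑ l : Fin p, ∑ m : Fin p,
          G l m * (γ ((l : ℕ) + 1) : ℂ) * (γ ((m : ℕ) + 1) : ℂ) * ((b l : ℤ) : ℂ) *
            ((b m : ℤ) : ℂ)) *
      ∏ l : Fin p,
        ((Real.sqrt ((n l).factorial : ℝ) : ℂ))⁻¹ *
          (-Complex.I *
              ∑ t : Fin p, L l t * (γ ((t : ℕ) + 1) : ℂ) * ((b t : ℤ) : ℂ)) ^ n l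

section AuxStmt18
open Filter Topology
open scoped NNReal

theorem aux_desc (N : ℕ) :
    Tendsto (fun D : ℕ => (D.descFactorial N : ℝ) / (D : ℝ) ^ N) atTop (nhds 1) := by
  have hg : Tendsto (fun D : ℕ => ∏ i ∈ Finset.range N, (1 - (i : ℝ) / (D : ℝ)))
      atTop (nhds (∏ _i ∈ Finset.range N, (1:ℝ))) := by
    apply tendsto_finset_prod
    intro i _
    have h0 : Tendsto (fun D : ℕ => (i : ℝ) / (D : ℝ)) atTop (nhds 0) :=
      tendsto_const_div_atTop_nhds_zero_nat (i : ℝ)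
    have := (tendsto_const_nhds (x := (1:ℝ)) (f := atTop)).sub h0
    simpa using this
  rw [Finset.prod_const_one] at hg
  apply Tendsto.congr' _ hg
  filter_upwards [eventually_ge_atTop (max N 1)] with D hD
  have hD1 : 1 ≤ D := le_trans (le_max_right _ _) hD
  have hDN : N ≤ D := le_trans (le_max_left _ _) hD
  have hD0 : (D : ℝ) ≠ 0 := by positivity
  rw [Nat.descFactorial_eq_prod_range]
  push_cast
  rw [show ((D:ℝ)) ^ N = ∏ _i ∈ Finset.range N, (D:ℝ) by
      rw [Finset.prod_const, Finset.card_range],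
    ← Finset.prod_div_distrib]
  apply Finset.prod_congr rfl
  intro i hi
  have hiD : i ≤ D := le_trans (Nat.le_of_lt (Finset.mem_range.mp hi)) hDN
  rw [Nat.cast_sub hiD]
  field_simp

theorem aux_scal (N : ℕ) (P : ℝ) (hP : 0 < P) :
    Tendsto (fun D : ℕ => ((D : ℝ) ^ (-(N : ℝ) / 2)) *
        Real.sqrt ((D.factorial : ℝ) / (((D - N).factorial : ℝ) * P))) atTop
      (nhds ((Real.sqrt P)⁻¹)) := by
  have hlim : Tendsto (fun D : ℕ => Real.sqrt ((D.descFactorial N : ℝ) / (D : ℝ) ^ N / P))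
      atTop (nhds ((Real.sqrt P)⁻¹)) := by
    have h1 : Tendsto (fun D : ℕ => (D.descFactorial N : ℝ) / (D : ℝ) ^ N / P) atTop
        (nhds (1 / P)) := (aux_desc N).div_const P
    have h2 := (Real.continuous_sqrt.continuousAt.tendsto).comp h1
    simpa [Function.comp_def, one_div, Real.sqrt_inv] using h2
  apply Tendsto.congr' _ hlim
  filter_upwards [eventually_ge_atTop (max N 1)] with D hD
  have hD1 : 1 ≤ D := le_trans (le_max_right _ _) hD
  have hDN : N ≤ D := le_trans (le_max_left _ _) hD
  have hx : (0:ℝ) ≤ (D:ℝ) := by positivity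
  have hfac : (D.factorial : ℝ) = ((D - N).factorial : ℝ) * (D.descFactorial N : ℝ) := by
    exact_mod_cast (Nat.factorial_mul_descFactorial hDN).symm
  have hfne : ((D - N).factorial : ℝ) ≠ 0 := by positivity
  have hstep1 : (D.factorial : ℝ) / (((D - N).factorial : ℝ) * P)
      = (D.descFactorial N : ℝ) / P := by
    rw [hfac]; field_simp
  have hstep2 : ((D : ℝ) ^ (-(N : ℝ) / 2)) = (Real.sqrt ((D : ℝ) ^ N))⁻¹ := by
    have hs : Real.sqrt ((D:ℝ) ^ N) = (D:ℝ) ^ ((N:ℝ) / 2) := by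
      rw [Real.sqrt_eq_rpow, ← Real.rpow_natCast (D:ℝ) N, ← Real.rpow_mul hx]
      congr 1; ring
    rw [hs, ← Real.rpow_neg hx]
    ring_nf
  rw [hstep1, hstep2,
    show (D.descFactorial N : ℝ) / (D : ℝ) ^ N / P
        = ((D.descFactorial N : ℝ) / P) / ((D:ℝ) ^ N) by ring,
    Real.sqrt_div (by positivity), div_eq_mul_inv, mul_comm]

theorem aux_l2 {α : Type*} (cd : ℕ → α → ℂ) (c : α → ℂ)
    (hpt : ∀ x, Tendsto (fun D => cd D x) atTop (nhds (c x)))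
    (hc : (∑' x, (‖c x‖₊ : ℝ≥0∞) ^ 2) = 1)
    (hcd : Tendsto (fun D => ∑' x, (‖cd D x‖₊ : ℝ≥0∞) ^ 2) atTop (nhds 1)) :
    Tendsto (fun D => ∑' x, (‖cd D x - c x‖₊ : ℝ≥0∞) ^ 2) atTop (nhds 0) := by
  set e : ℕ → ℝ≥0∞ := fun D => ∑' x, (‖cd D x - c x‖₊ : ℝ≥0∞) ^ 2 with he
  set s : ℕ → ℝ≥0∞ := fun D => ∑' x, (‖cd D x + c x‖₊ : ℝ≥0∞) ^ 2 with hs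
  set a : ℕ → ℝ≥0∞ := fun D => ∑' x, (‖cd D x‖₊ : ℝ≥0∞) ^ 2 with ha
  have par : ∀ D x, (‖cd D x - c x‖₊ : ℝ≥0∞) ^ 2 + (‖cd D x + c x‖₊ : ℝ≥0∞) ^ 2
      = 2 * (‖cd D x‖₊ : ℝ≥0∞) ^ 2 + 2 * (‖c x‖₊ : ℝ≥0∞) ^ 2 := by
    intro D x
    have h := parallelogram_law_with_norm ℝ (cd D x) (c x)
    have : (‖cd D x - c x‖₊ : ℝ≥0) ^ 2 + (‖cd D x + c x‖₊ : ℝ≥0) ^ 2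
        = 2 * (‖cd D x‖₊ : ℝ≥0) ^ 2 + 2 * (‖c x‖₊ : ℝ≥0) ^ 2 := by
      apply NNReal.coe_injective
      push_cast [coe_nnnorm]
      linarith [h]
    exact_mod_cast congrArg (fun t : ℝ≥0 => (t : ℝ≥0∞)) this
  have key : ∀ D, e D + s D = 2 * a D + 2 := by
    intro D
    rw [he, hs, ha, ← ENNReal.tsum_add]
    simp_rw [par]
    rw [ENNReal.tsum_add, ENNReal.tsum_mul_left, ENNReal.tsum_mul_left, hc, mul_one]
  -- tendsto of 2a+2 to 4
  have h2a : Tendsto (fun D => 2 * a D + 2) atTop (nhds 4) := by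
    have : Tendsto (fun D => 2 * a D) atTop (nhds 2) := by
      have := ENNReal.Tendsto.const_mul hcd (Or.inr (by norm_num : (2:ℝ≥0∞) ≠ ⊤))
      simpa using this
    have h := this.add (tendsto_const_nhds (x := (2:ℝ≥0∞)))
    simpa [show (2:ℝ≥0∞) + 2 = 4 by norm_num] using h
  -- pointwise: ‖cd D x + c x‖² → ‖2 c x‖² = 4 ‖c x‖²
  have hptsum : ∀ x, Tendsto (fun D => (‖cd D x + c x‖₊ : ℝ≥0∞) ^ 2) atTop
      (nhds (4 * (‖c x‖₊ : ℝ≥0∞) ^ 2)) := by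
    intro x
    have h1 : Tendsto (fun D => cd D x + c x) atTop (nhds (c x + c x)) :=
      (hpt x).add tendsto_const_nhds
    have h2 : Tendsto (fun D => (‖cd D x + c x‖₊ : ℝ≥0∞)) atTop
        (nhds ((‖c x + c x‖₊ : ℝ≥0∞))) := by
      rw [ENNReal.tendsto_coe]
      exact h1.nnnorm
    have h3 := ENNReal.Tendsto.pow h2 (n := 2)
    have : ((‖c x + c x‖₊ : ℝ≥0∞)) ^ 2 = 4 * (‖c x‖₊ : ℝ≥0∞) ^ 2 := by
      have : ‖c x + c x‖₊ = 2 * ‖c x‖₊ := by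
        rw [← two_mul]
        simp [nnnorm_mul]
      rw [this]
      push_cast
      ring
    rwa [this] at h3
  -- liminf s ≥ 4
  have h4 : (∑' x, 4 * (‖c x‖₊ : ℝ≥0∞) ^ 2) = 4 := by
    rw [ENNReal.tsum_mul_left, hc, mul_one]
  have hliminf : (4 : ℝ≥0∞) ≤ liminf s atTop := by
    rw [← h4, ENNReal.tsum_eq_iSup_sum]
    apply iSup_le
    intro F
    have hFt : Tendsto (fun D => ∑ x ∈ F, (‖cd D x + c x‖₊ : ℝ≥0∞) ^ 2) atTop
        (nhds (∑ x ∈ F, 4 * (‖c x‖₊ : ℝ≥0∞) ^ 2)) :=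
      tendsto_finset_sum F (fun x _ => hptsum x)
    have hle : ∀ᶠ D in atTop, (fun D => ∑ x ∈ F, (‖cd D x + c x‖₊ : ℝ≥0∞) ^ 2) D ≤ s D := by
      filter_upwards with D
      exact ENNReal.sum_le_tsum F
    calc ∑ x ∈ F, 4 * (‖c x‖₊ : ℝ≥0∞) ^ 2
        = liminf (fun D => ∑ x ∈ F, (‖cd D x + c x‖₊ : ℝ≥0∞) ^ 2) atTop := hFt.liminf_eq.symm
      _ ≤ liminf s atTop := liminf_le_liminf hle
  -- limsup s ≤ 4
  have hlimsup : limsup s atTop ≤ 4 := by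
    have hle : ∀ᶠ D in atTop, s D ≤ 2 * a D + 2 := by
      filter_upwards with D
      rw [← key D]
      exact le_add_self
    calc limsup s atTop ≤ limsup (fun D => 2 * a D + 2) atTop := limsup_le_limsup hle
      _ = 4 := h2a.limsup_eq
  have hstend : Tendsto s atTop (nhds 4) :=
    tendsto_of_le_liminf_of_limsup_le hliminf hlimsup
  -- finiteness eventually
  have hev : ∀ᶠ D in atTop, a D < 2 := hcd.eventually_lt_const (by norm_num)
  have heeq : ∀ᶠ D in atTop, e D = (2 * a D + 2) - s D := by
    filter_upwards [hev] with D hD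
    have hfin : 2 * a D + 2 < ⊤ := by
      have : a D < ⊤ := hD.trans (by norm_num)
      exact ENNReal.add_lt_top.mpr ⟨ENNReal.mul_lt_top (by norm_num) this, by norm_num⟩
    have hsne : s D ≠ ⊤ := by
      intro hT
      have hk := key D
      rw [hT] at hk
      simp only [add_top] at hk
      exact hfin.ne hk.symm
    exact (ENNReal.eq_sub_of_add_eq hsne (key D))
  have : Tendsto (fun D => (2 * a D + 2) - s D) atTop (nhds 0) := by
    have := ENNReal.Tendsto.sub h2a hstend (Or.inl (by norm_num))
    simpa using this
  exact Tendsto.congr' (heeq.mono fun D h => h.symm) this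

theorem aux_sqrt_prod {ι : Type*} (s : Finset ι) (f : ι → ℝ) (h : ∀ i, 0 ≤ f i) :
    Real.sqrt (∏ i ∈ s, f i) = ∏ i ∈ s, Real.sqrt (f i) := by
  induction s using Finset.cons_induction with
  | empty => simp
  | cons i s hi ih => rw [Finset.prod_cons, Finset.prod_cons, Real.sqrt_mul (h i), ih]

theorem aux_pt (p : ℕ) (γ β : ℕ → ℝ)
    (GD LD : ℕ → Matrix (Fin p) (Fin p) ℂ) (G L : Matrix (Fin p) (Fin p) ℂ)
    (hG : ∀ j k, Tendsto (fun D => GD D j k) atTop (nhds (G j k)))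
    (hL : ∀ j k, Tendsto (fun D => LD D j k) atTop (nhds (L j k)))
    (s : ℤˣ) (n : Fin p → ℕ) :
    Tendsto (fun D : ℕ => cD p γ β (GD D) (LD D) D s n) atTop
      (nhds (cLim p γ β G L s n)) := by
  set N := ∑ l, n l with hN
  set P := ∏ l, ((n l).factorial : ℝ) with hPdef
  have hP : 0 < P := Finset.prod_pos fun l _ => by positivity
  -- abbreviations
  set A : (Fin p → ℤˣ) → ℂ := fun b => fOne p β (Fin.snoc b s) with hA
  set S : Matrix (Fin p) (Fin p) ℂ → (Fin p → ℤˣ) → ℂ := fun M b =>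
    ∑ l : Fin p, ∑ m : Fin p,
      M l m * (γ ((l : ℕ) + 1) : ℂ) * (γ ((m : ℕ) + 1) : ℂ) * ((b l : ℤ) : ℂ) *
        ((b m : ℤ) : ℂ) with hSdef
  set Q : Matrix (Fin p) (Fin p) ℂ → (Fin p → ℤˣ) → ℂ := fun M b =>
    ∏ l : Fin p,
      (-Complex.I * ∑ t : Fin p, M l t * (γ ((t : ℕ) + 1) : ℂ) * ((b t : ℤ) : ℂ)) ^ n l
    with hQdef
  -- the rearranged limit function
  have hlim : Tendsto (fun D : ℕ =>
      ∑ b : Fin p → ℤˣ, (A b * Complex.exp (-(1 / 2 : ℂ) * S (GD D) b)) *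
        (((((D : ℝ) ^ (-(N : ℝ) / 2)) *
            Real.sqrt ((D.factorial : ℝ) / (((D - N).factorial : ℝ) * P)) : ℝ) : ℂ) *
          Q (LD D) b)) atTop
      (nhds (∑ b : Fin p → ℤˣ, (A b * Complex.exp (-(1 / 2 : ℂ) * S G b)) *
        ((((Real.sqrt P)⁻¹ : ℝ) : ℂ) * Q L b))) := by
    apply tendsto_finset_sum
    intro b _
    have hSt : Tendsto (fun D => S (GD D) b) atTop (nhds (S G b)) := by
      apply tendsto_finset_sum; intro l _
      apply tendsto_finset_sum; intro m _
      exact ((((hG l m).mul_const _).mul_const _).mul_const _).mul_const _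
    have hE : Tendsto (fun D => Complex.exp (-(1 / 2 : ℂ) * S (GD D) b)) atTop
        (nhds (Complex.exp (-(1 / 2 : ℂ) * S G b))) :=
      (Complex.continuous_exp.continuousAt.tendsto).comp (hSt.const_mul _)
    have hQt : Tendsto (fun D => Q (LD D) b) atTop (nhds (Q L b)) := by
      apply tendsto_finset_prod; intro l _
      apply Tendsto.pow
      exact Tendsto.const_mul _ (tendsto_finset_sum _ fun t _ =>
        ((hL l t).mul_const _).mul_const _)
    have hXY : Tendsto (fun D : ℕ =>
        ((((D : ℝ) ^ (-(N : ℝ) / 2)) *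
          Real.sqrt ((D.factorial : ℝ) / (((D - N).factorial : ℝ) * P)) : ℝ) : ℂ)) atTop
        (nhds (((Real.sqrt P)⁻¹ : ℝ) : ℂ)) :=
      (Complex.continuous_ofReal.continuousAt.tendsto).comp (aux_scal N P hP)
    exact ((tendsto_const_nhds.mul hE).mul (hXY.mul hQt))
  -- identify limit with cLim
  have hval : (∑ b : Fin p → ℤˣ, (A b * Complex.exp (-(1 / 2 : ℂ) * S G b)) *
        ((((Real.sqrt P)⁻¹ : ℝ) : ℂ) * Q L b)) = cLim p γ β G L s n := by
    rw [cLim]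
    apply Finset.sum_congr rfl
    intro b _
    rw [Finset.prod_mul_distrib]
    have hc : (((Real.sqrt P)⁻¹ : ℝ) : ℂ)
        = ∏ l : Fin p, ((Real.sqrt ((n l).factorial : ℝ) : ℂ))⁻¹ := by
      rw [hPdef, aux_sqrt_prod _ _ (fun l => by positivity)]
      push_cast
      rw [← Finset.prod_inv_distrib]
    rw [hc, hQdef, hA, hSdef]
  rw [← hval]
  apply Tendsto.congr' _ hlim
  filter_upwards [eventually_ge_atTop N] with D hD
  rw [cD, if_pos hD]
  apply Finset.sum_congr rfl
  intro b _
  simp only [hA, hSdef, hQdef, ← hN, ← hPdef, Complex.ofReal_mul]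
  ring

end AuxStmt18

/-- Convergence of the embedded approximate tree state in the
infinite-degree limit: if `G_D → G` and `L_D → L` entrywise, then (i) the coefficients
`c_D(a_{p+1}, n)` converge pointwise to the limiting Fock coefficients `c(a_{p+1}, n)`;
and (ii) if moreover `Σ |c|² = 1` and `Σ |c_D|² → 1`, then `c_D → c` in
`ℓ²({±1} × ℕ^p)`. -/
theorem stmt18 (p : ℕ) (hp : 1 ≤ p) (γ β : ℕ → ℝ)
    (GD LD : ℕ → Matrix (Fin p) (Fin p) ℂ) (G L : Matrix (Fin p) (Fin p) ℂ)
    (hG : ∀ j k, Filter.Tendsto (fun D => GD D j k) Filter.atTop (nhds (G j k)))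
    (hL : ∀ j k, Filter.Tendsto (fun D => LD D j k) Filter.atTop (nhds (L j k))) :
    (∀ (s : ℤˣ) (n : Fin p → ℕ),
        Filter.Tendsto (fun D : ℕ => cD p γ β (GD D) (LD D) D s n) Filter.atTop
          (nhds (cLim p γ β G L s n))) ∧
      ((∑' x : ℤˣ × (Fin p → ℕ), (‖cLim p γ β G L x.1 x.2‖₊ : ℝ≥0∞) ^ 2) = 1 →
        Filter.Tendsto
          (fun D : ℕ =>
            ∑' x : ℤˣ × (Fin p → ℕ), (‖cD p γ β (GD D) (LD D) D x.1 x.2‖₊ : ℝ≥0∞) ^ 2)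
          Filter.atTop (nhds 1) →
        Filter.Tendsto
          (fun D : ℕ =>
            ∑' x : ℤˣ × (Fin p → ℕ),
              (‖cD p γ β (GD D) (LD D) D x.1 x.2 - cLim p γ β G L x.1 x.2‖₊ : ℝ≥0∞) ^ 2)
          Filter.atTop (nhds 0))
  := by
  constructor
  · exact fun s n => aux_pt p γ β GD LD G L hG hL s n
  · intro h1 h2
    have hpt : ∀ x : ℤˣ × (Fin p → ℕ), Filter.Tendsto
        (fun D : ℕ => cD p γ β (GD D) (LD D) D x.1 x.2) Filter.atTop
        (nhds (cLim p γ β G L x.1 x.2)) :=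
      fun x => aux_pt p γ β GD LD G L hG hL x.1 x.2
    exact aux_l2 _ _ hpt h1 h2

end
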